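/- arXiv:1909.09680 — 5 statements merged into one kernel-verified Lean document; each statement's English description precedes it below -/
import Mathlib

section
/- For every real x ≥ 0, e^{-x} = (4π)^{-1/2} ∫_0^∞ t^{-3/2} exp(-1/(4t)) e^{-t x²} dt. -/
open Real MeasureTheory

namespace Subord
open Set

theorem deriv_psi (a s : ℝ) (hs0 : s ≠ 0) :
    HasDerivAt (fun s : ℝ => s - a / s) (1 + a / s ^ 2) s := by
  have h := (hasDerivAt_id s).sub ((hasDerivAt_inv hs0).const_mul a)
  simp only [div_eq_mul_inv]
  refine h.congr_deriv ?_
  ring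

theorem psi_injOn (a : ℝ) (ha : 0 < a) : InjOn (fun s : ℝ => s - a / s) (Ioi 0) := by
  intro s hs t ht h
  simp only [mem_Ioi] at hs ht
  have key : (s - t) * (1 + a / (s * t)) = 0 := by
    have h2 : s - a/s = t - a/t := h
    field_simp at h2 ⊢
    nlinarith [h2]
  rcases mul_eq_zero.1 key with h' | h'
  · linarith [sub_eq_zero.1 h']
  · exfalso
    have : 0 < 1 + a / (s * t) := by positivity
    linarith

theorem psi_image (a : ℝ) (ha : 0 < a) : (fun s : ℝ => s - a / s) '' Ioi 0 = univ := by
  apply eq_univ_of_forall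
  intro u
  set s := (u + Real.sqrt (u ^ 2 + 4 * a)) / 2 with hsdef
  have hsq : Real.sqrt (u ^ 2 + 4 * a) ^ 2 = u ^ 2 + 4 * a :=
    Real.sq_sqrt (by positivity)
  have hgt : |u| < Real.sqrt (u ^ 2 + 4 * a) := by
    have : Real.sqrt (u^2) < Real.sqrt (u ^ 2 + 4 * a) :=
      Real.sqrt_lt_sqrt (by positivity) (by linarith)
    rwa [Real.sqrt_sq_eq_abs] at this
  have hs : 0 < s := by
    have := neg_abs_le u
    have := abs_nonneg u
    rw [hsdef]
    nlinarith
  refine ⟨s, hs, ?_⟩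
  have hs0 : s ≠ 0 := ne_of_gt hs
  show s - a / s = u
  have h2 : a = s * s - u * s := by rw [hsdef]; nlinarith [hsq]
  rw [h2]
  field_simp
  ring

theorem E_meas (a : ℝ) : Measurable (fun s : ℝ => Real.exp (-(s - a/s)^2)) := by
  have h1 : Measurable fun s : ℝ => s - a/s := measurable_id.sub (measurable_const.div measurable_id)
  exact Real.measurable_exp.comp ((h1.pow_const 2).neg)

theorem E_bound (a s : ℝ) (hs : 0 < s) :
    Real.exp (-(s - a/s)^2) ≤ Real.exp (2*a) * Real.exp (-(1:ℝ)*s^2) := by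
  rw [← Real.exp_add]
  apply Real.exp_le_exp.2
  have h : s * (a/s) = a := mul_div_cancel₀ a (ne_of_gt hs)
  nlinarith [sq_nonneg (a/s)]

theorem int_E (a : ℝ) (ha : 0 < a) :
    IntegrableOn (fun s : ℝ => Real.exp (-(s - a/s)^2)) (Ioi 0) := by
  have hg : IntegrableOn (fun s : ℝ => Real.exp (2*a) * Real.exp (-(1:ℝ) * s^2)) (Ioi 0) :=
    ((integrable_exp_neg_mul_sq one_pos).const_mul _).integrableOn
  apply Integrable.mono hg ((E_meas a).aestronglyMeasurable.restrict)
  filter_upwards [ae_restrict_mem measurableSet_Ioi] with s hs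
  rw [Real.norm_eq_abs, Real.norm_eq_abs, Real.abs_exp, abs_of_pos (by positivity)]
  exact E_bound a s hs

theorem B_bound (a s : ℝ) (ha : 0 < a) (hs : 0 < s) :
    a / s^2 * Real.exp (-(s - a/s)^2) ≤ Real.exp (2*a) / a * Real.exp (-(1:ℝ)*s^2) := by
  have h : s * (a/s) = a := mul_div_cancel₀ a (ne_of_gt hs)
  have key : -(s - a/s)^2 = 2*a + (-(1:ℝ)*s^2) + (-(a/s)^2) := by nlinarith
  rw [key, Real.exp_add, Real.exp_add]
  have hy : a / s^2 * Real.exp (-(a/s)^2) ≤ 1/a := by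
    set y := (a/s)^2 with hy
    have hyp : 0 < y := by positivity
    have h1 : a / s^2 = y / a := by rw [hy]; field_simp
    rw [h1]
    have h2 : y * Real.exp (-y) ≤ 1 := by
      rw [Real.exp_neg]
      rw [mul_inv_le_iff₀ (Real.exp_pos y), one_mul]
      linarith [Real.add_one_le_exp y]
    calc y / a * Real.exp (-y) = (y * Real.exp (-y)) / a := by ring
    _ ≤ 1 / a := by gcongr
  calc a / s^2 * (Real.exp (2*a) * Real.exp (-1*s^2) * Real.exp (-(a/s)^2))
      = (a / s^2 * Real.exp (-(a/s)^2)) * Real.exp (2*a) * Real.exp (-1*s^2) := by ring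
    _ ≤ (1/a) * Real.exp (2*a) * Real.exp (-1*s^2) := by
        apply mul_le_mul_of_nonneg_right (mul_le_mul_of_nonneg_right hy (Real.exp_pos _).le)
          (Real.exp_pos _).le
    _ = Real.exp (2*a) / a * Real.exp (-1*s^2) := by ring

theorem int_B (a : ℝ) (ha : 0 < a) :
    IntegrableOn (fun s : ℝ => a / s^2 * Real.exp (-(s - a/s)^2)) (Ioi 0) := by
  have hg : IntegrableOn (fun s : ℝ => Real.exp (2*a) / a * Real.exp (-(1:ℝ) * s^2)) (Ioi 0) :=
    ((integrable_exp_neg_mul_sq one_pos).const_mul _).integrableOn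
  have hm : Measurable (fun s : ℝ => a / s^2 * Real.exp (-(s - a/s)^2)) :=
    (measurable_const.div (measurable_id.pow_const 2)).mul (E_meas a)
  apply Integrable.mono hg hm.aestronglyMeasurable.restrict
  filter_upwards [ae_restrict_mem measurableSet_Ioi] with s hs
  rw [Real.norm_eq_abs, Real.norm_eq_abs, abs_of_nonneg (by positivity),
    abs_of_pos (by positivity)]
  exact B_bound a s ha hs

theorem phi_image (a : ℝ) (ha : 0 < a) : (fun s : ℝ => a / s) '' Ioi 0 = Ioi 0 := by
  ext t
  constructor
  · rintro ⟨s, hs, rfl⟩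
    exact div_pos ha hs
  · intro ht
    exact ⟨a / t, div_pos ha ht, by field_simp⟩

theorem hAB (a : ℝ) (ha : 0 < a) :
    ∫ s in Ioi (0:ℝ), Real.exp (-(s - a/s)^2)
      = ∫ s in Ioi (0:ℝ), a / s^2 * Real.exp (-(s - a/s)^2) := by
  conv_lhs => rw [← phi_image a ha]
  rw [integral_image_eq_integral_abs_deriv_smul measurableSet_Ioi
    (f' := fun s => -(a / s^2))
    (fun s hs => by
      have hs0 : s ≠ 0 := ne_of_gt hs
      have h := (hasDerivAt_inv hs0).const_mul a
      have h2 : HasDerivAt (fun s : ℝ => a / s) (-(a / s^2)) s := by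
        simp only [div_eq_mul_inv]
        refine h.congr_deriv ?_
        ring
      exact h2.hasDerivWithinAt)
    (fun s hs t ht h => by
      simp only [mem_Ioi] at hs ht
      have : a / s = a / t := h
      field_simp at this
      linarith)]
  apply setIntegral_congr_fun measurableSet_Ioi
  intro s hs
  simp only [mem_Ioi] at hs
  have hs0 : s ≠ 0 := ne_of_gt hs
  have h1 : a / (a / s) = s := by field_simp
  have h2 : |(-(a / s^2))| = a / s^2 := by
    rw [abs_neg, abs_of_pos (by positivity)]
  simp only [smul_eq_mul]
  rw [h2, h1]
  ring_nf

theorem glasser (a : ℝ) (ha : 0 < a) :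
    ∫ s in Ioi (0:ℝ), Real.exp (-(s - a/s)^2) = Real.sqrt π / 2 := by
  have hcv := integral_image_eq_integral_abs_deriv_smul measurableSet_Ioi
    (f' := fun s => 1 + a/s^2) (fun s hs => (deriv_psi a s (ne_of_gt hs)).hasDerivWithinAt)
    (psi_injOn a ha) (fun u => Real.exp (-u^2))
  rw [psi_image a ha, Measure.restrict_univ] at hcv
  have hgauss : ∫ u : ℝ, Real.exp (-u^2) = Real.sqrt π := by
    simpa using integral_gaussian 1
  have htot : Real.sqrt π = ∫ s in Ioi (0:ℝ),
      (Real.exp (-(s - a/s)^2) + a/s^2 * Real.exp (-(s - a/s)^2)) := by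
    rw [← hgauss, hcv]
    apply setIntegral_congr_fun measurableSet_Ioi
    intro s hs
    simp only [mem_Ioi] at hs
    have h1 : |1 + a/s^2| = 1 + a/s^2 := abs_of_pos (by positivity)
    simp only [smul_eq_mul]
    rw [h1]
    ring
  rw [integral_add (int_E a ha) (int_B a ha), ← hAB a ha] at htot
  linarith

theorem key (a : ℝ) (ha : 0 ≤ a) :
    ∫ s in Ioi (0:ℝ), Real.exp (-s^2 - a^2/s^2)
      = Real.sqrt π / 2 * Real.exp (-(2*a)) := by
  rcases eq_or_lt_of_le ha with rfl | ha'
  · simp only [ne_eq, OfNat.ofNat_ne_zero, not_false_eq_true, zero_pow, zero_div, sub_zero,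
      mul_zero, neg_zero, Real.exp_zero, mul_one]
    have := integral_gaussian_Ioi 1
    simp only [one_mul, div_one] at this
    rw [← this]
    apply setIntegral_congr_fun measurableSet_Ioi
    intro s _
    norm_num
  · have hcong : ∀ s ∈ Ioi (0:ℝ), Real.exp (-s^2 - a^2/s^2)
        = Real.exp (-(2*a)) * Real.exp (-(s - a/s)^2) := by
      intro s hs
      simp only [mem_Ioi] at hs
      rw [← Real.exp_add]
      congr 1
      have h : s * (a/s) = a := mul_div_cancel₀ a (ne_of_gt hs)
      have h2 : (a/s)^2 = a^2/s^2 := div_pow a s 2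
      nlinarith [h, h2]
    rw [setIntegral_congr_fun measurableSet_Ioi hcong, MeasureTheory.integral_const_mul,
      glasser a ha']
    ring

theorem f1_image : (fun s : ℝ => 1 / (4 * s ^ 2)) '' Ioi 0 = Ioi 0 := by
  ext t
  constructor
  · rintro ⟨s, hs, rfl⟩
    simp only [mem_Ioi] at hs
    exact mem_Ioi.2 (by positivity)
  · intro ht
    simp only [mem_Ioi] at ht
    refine ⟨1 / (2 * Real.sqrt t), mem_Ioi.2 (by positivity), ?_⟩
    have h : Real.sqrt t ^ 2 = t := Real.sq_sqrt ht.le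
    have h0 : Real.sqrt t ≠ 0 := by positivity
    field_simp
    nlinarith [h]

theorem f1_inj : InjOn (fun s : ℝ => 1 / (4 * s ^ 2)) (Ioi 0) := by
  intro s hs t ht h
  simp only [mem_Ioi] at hs ht
  simp only at h
  field_simp at h
  nlinarith [h, sq_nonneg (s - t), sq_nonneg (s + t)]

theorem f1_deriv (s : ℝ) (hs : s ≠ 0) :
    HasDerivAt (fun s : ℝ => 1 / (4 * s ^ 2)) (-1 / (2 * s ^ 3)) s := by
  have h1 : HasDerivAt (fun s : ℝ => s ^ 2) (2 * s) s := by
    simpa using hasDerivAt_pow 2 s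
  have h2 := (h1.inv (pow_ne_zero 2 hs)).const_mul (1/4 : ℝ)
  have heq : (fun s : ℝ => 1 / (4 * s ^ 2)) = fun y : ℝ => 1/4 * (y ^ 2)⁻¹ := by
    funext y; ring
  rw [heq]
  refine h2.congr_deriv ?_
  field_simp
  ring

theorem integrand_eval (x s : ℝ) (hs : 0 < s) :
    (1 / (4 * s ^ 2) : ℝ) ^ (-(3 : ℝ) / 2) * Real.exp (-1 / (4 * (1 / (4 * s ^ 2))))
        * Real.exp (-(1 / (4 * s ^ 2)) * x ^ 2)
      = 8 * s ^ 3 * Real.exp (-s ^ 2 - (x/2) ^ 2 / s ^ 2) := by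
  have hs0 : s ≠ 0 := ne_of_gt hs
  have h2s : (0:ℝ) ≤ 2 * s := by positivity
  have hrpow : (1 / (4 * s ^ 2) : ℝ) ^ (-(3 : ℝ) / 2) = 8 * s ^ 3 := by
    rw [show (1 / (4 * s ^ 2) : ℝ) = ((2*s) ^ (2:ℕ))⁻¹ by field_simp; ring,
      ← Real.rpow_natCast (2*s) 2, ← Real.rpow_neg h2s,
      ← Real.rpow_mul h2s]
    norm_num
    ring
  have he1 : -1 / (4 * (1 / (4 * s ^ 2))) = -s ^ 2 := by
    rw [div_eq_iff (by positivity : (4 * (1 / (4 * s ^ 2)) : ℝ) ≠ 0)]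
    field_simp
  have he2 : -(1 / (4 * s ^ 2)) * x ^ 2 = -((x/2) ^ 2 / s ^ 2) := by
    rw [div_pow, div_div]
    rw [show ((2:ℝ)^2 * s^2) = 4 * s^2 by ring]
    ring
  rw [hrpow, he1, he2,
    show -s ^ 2 - (x/2) ^ 2 / s ^ 2 = -s ^ 2 + -((x/2) ^ 2 / s ^ 2) by ring,
    Real.exp_add]
  ring

end Subord

/-- Subordination identity: e^{-x} = (4π)^{-1/2} ∫_0^∞ t^{-3/2} e^{-1/(4t)} e^{-t x²} dt. -/
theorem subordination (x : ℝ) (hx : 0 ≤ x) :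
    Real.exp (-x) =
      (4 * π) ^ (-(1 : ℝ) / 2) *
        ∫ t in Set.Ioi (0 : ℝ),
          t ^ (-(3 : ℝ) / 2) * Real.exp (-1 / (4 * t)) * Real.exp (-t * x ^ 2) := by
  have hcv := MeasureTheory.integral_image_eq_integral_abs_deriv_smul
    (measurableSet_Ioi (a := (0:ℝ)))
    (f' := fun s => -1 / (2 * s ^ 3))
    (fun s hs => (Subord.f1_deriv s (ne_of_gt hs)).hasDerivWithinAt)
    Subord.f1_inj
    (fun t => t ^ (-(3 : ℝ) / 2) * Real.exp (-1 / (4 * t)) * Real.exp (-t * x ^ 2))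
  rw [Subord.f1_image] at hcv
  rw [hcv]
  have heval : ∀ s ∈ Set.Ioi (0:ℝ),
      |(-1 / (2 * s ^ 3))| • ((1 / (4 * s ^ 2) : ℝ) ^ (-(3 : ℝ) / 2)
          * Real.exp (-1 / (4 * (1 / (4 * s ^ 2))))
          * Real.exp (-(1 / (4 * s ^ 2)) * x ^ 2))
        = 4 * Real.exp (-s ^ 2 - (x/2) ^ 2 / s ^ 2) := by
    intro s hs
    simp only [Set.mem_Ioi] at hs
    have hs0 : s ≠ 0 := ne_of_gt hs
    rw [Subord.integrand_eval x s hs, smul_eq_mul,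
      show (-1 / (2 * s ^ 3) : ℝ) = -(1 / (2 * s ^ 3)) by ring, abs_neg,
      abs_of_pos (by positivity)]
    field_simp
    ring
  rw [MeasureTheory.setIntegral_congr_fun measurableSet_Ioi heval,
    MeasureTheory.integral_const_mul, Subord.key (x/2) (by linarith),
    show 2 * (x/2) = x by ring]
  have h4π : ((4:ℝ) * π) ^ (-(1 : ℝ) / 2) = (2 * Real.sqrt π)⁻¹ := by
    rw [show (-(1:ℝ)/2) = -(1/2 : ℝ) by norm_num,
      Real.rpow_neg (by positivity), ← Real.sqrt_eq_rpow,
      show (4:ℝ) * π = (2 * Real.sqrt π) ^ 2 by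
        rw [mul_pow, Real.sq_sqrt Real.pi_nonneg]; ring,
      Real.sqrt_sq (by positivity)]
  rw [h4π]
  have hπ : Real.sqrt π ≠ 0 := by positivity
  field_simp
  ring
end

section
/- For all real x > 0, 1/(e^x - 1) = ∫_0^∞ h_b(t) e^{-t x²} dt, where h_b(t) = (4π)^{-1/2} t^{-3/2} ∑_{k=1}^∞ k·exp(-k²/(4t)). -/
open Real MeasureTheory Set Filter Topology

section
variable {a b : ℝ}

/-- derivative -/
lemma hd (ha : 0 < a) (t : ℝ) (ht : t ∈ Ioi (0:ℝ)) :
    HasDerivAt (fun t : ℝ => b * t ^ ((1:ℝ)/2) - a * t ^ (-(1:ℝ)/2))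
      ((b/2) * t ^ (-(1:ℝ)/2) + (a/2) * t ^ (-(3:ℝ)/2)) t := by
  have ht0 : t ≠ 0 := (mem_Ioi.mp ht).ne'
  have h1 := (Real.hasDerivAt_rpow_const (x := t) (p := (1:ℝ)/2) (Or.inl ht0)).const_mul b
  have h2 := (Real.hasDerivAt_rpow_const (x := t) (p := -(1:ℝ)/2) (Or.inl ht0)).const_mul a
  have := h1.sub h2
  refine this.congr_deriv ?_
  have e1 : (1:ℝ)/2 - 1 = -(1:ℝ)/2 := by norm_num
  have e2 : -(1:ℝ)/2 - 1 = -(3:ℝ)/2 := by norm_num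
  rw [e1, e2]
  ring
end

lemma f_mono {a b : ℝ} (ha : 0 < a) (hb : 0 < b) :
    StrictMonoOn (fun t : ℝ => b * t ^ ((1:ℝ)/2) - a * t ^ (-(1:ℝ)/2)) (Ioi (0:ℝ)) := by
  intro t ht u hu htu
  have ht' : (0:ℝ) < t := ht
  have h1 : t ^ ((1:ℝ)/2) < u ^ ((1:ℝ)/2) :=
    Real.rpow_lt_rpow ht'.le htu (by norm_num)
  have h2 : u ^ (-(1:ℝ)/2) < t ^ (-(1:ℝ)/2) := by
    rw [neg_div, Real.rpow_neg ht'.le, Real.rpow_neg (le_of_lt (ht'.trans htu))]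
    exact inv_strictAnti₀ (Real.rpow_pos_of_pos ht' _) h1
  have := mul_lt_mul_of_pos_left h1 hb
  have := mul_lt_mul_of_pos_left h2 ha
  dsimp only
  nlinarith

lemma f_image {a b : ℝ} (ha : 0 < a) (hb : 0 < b) :
    (fun t : ℝ => b * t ^ ((1:ℝ)/2) - a * t ^ (-(1:ℝ)/2)) '' (Ioi (0:ℝ)) = univ := by
  apply Subset.antisymm (subset_univ _)
  have hcont : ContinuousOn (fun t : ℝ => b * t ^ ((1:ℝ)/2) - a * t ^ (-(1:ℝ)/2)) (Ioi (0:ℝ)) := by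
    apply ContinuousOn.sub
    · exact continuousOn_const.mul (fun t ht => (Real.continuousAt_rpow_const t _ (Or.inl (ne_of_gt ht))).continuousWithinAt)
    · exact continuousOn_const.mul (fun t ht => (Real.continuousAt_rpow_const t _ (Or.inl (ne_of_gt ht))).continuousWithinAt)
  have hs : Tendsto (fun t : ℝ => t ^ ((1:ℝ)/2)) (𝓝[>] (0:ℝ)) (𝓝[>] (0:ℝ)) := by
    rw [tendsto_nhdsWithin_iff]
    constructor
    · have : Tendsto (fun t : ℝ => t ^ ((1:ℝ)/2)) (𝓝 (0:ℝ)) (𝓝 ((0:ℝ) ^ ((1:ℝ)/2))) :=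
        (Real.continuousAt_rpow_const 0 _ (Or.inr (by norm_num))).tendsto
      simpa [Real.zero_rpow (by norm_num : ((1:ℝ)/2) ≠ 0)] using this.mono_left nhdsWithin_le_nhds
    · filter_upwards [self_mem_nhdsWithin] with t ht
      exact Real.rpow_pos_of_pos ht _
  have hbot : Tendsto (fun t : ℝ => b * t ^ ((1:ℝ)/2) - a * t ^ (-(1:ℝ)/2)) (𝓝[>] (0:ℝ)) atBot := by
    have hinv : Tendsto (fun t : ℝ => a * (t ^ ((1:ℝ)/2))⁻¹) (𝓝[>] (0:ℝ)) atTop :=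
      (tendsto_inv_nhdsGT_zero.comp hs).const_mul_atTop ha
    have h1 : Tendsto (fun t : ℝ => b * t ^ ((1:ℝ)/2)) (𝓝[>] (0:ℝ)) (𝓝 0) := by
      have := (hs.mono_right nhdsWithin_le_nhds).const_mul b
      simpa using this
    have hev : ∀ᶠ t in 𝓝[>] (0:ℝ), b * t ^ ((1:ℝ)/2) ≤ 1 :=
      h1.eventually (eventually_le_nhds (by norm_num))
    have hneg : Tendsto (fun t : ℝ => -(a * (t ^ ((1:ℝ)/2))⁻¹)) (𝓝[>] (0:ℝ)) atBot :=
      tendsto_neg_atBot_iff.mpr hinv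
    have := tendsto_atBot_add_left_of_ge' _ (1:ℝ) hev hneg
    refine this.congr' ?_
    filter_upwards [self_mem_nhdsWithin] with t ht
    rw [neg_div, Real.rpow_neg (le_of_lt ht)]
    ring
  have htop : Tendsto (fun t : ℝ => b * t ^ ((1:ℝ)/2) - a * t ^ (-(1:ℝ)/2)) atTop atTop := by
    have h1 : Tendsto (fun t : ℝ => b * t ^ ((1:ℝ)/2)) atTop atTop :=
      (tendsto_rpow_atTop (by norm_num)).const_mul_atTop hb
    have h2 : Tendsto (fun t : ℝ => a * t ^ (-(1:ℝ)/2)) atTop (𝓝 (a * 0)) := by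
      refine Tendsto.const_mul a ?_
      rw [neg_div]
      exact tendsto_rpow_neg_atTop (by norm_num)
    rw [mul_zero] at h2
    have hev : ∀ᶠ t in (atTop : Filter ℝ), (-1:ℝ) ≤ -(a * t ^ (-(1:ℝ)/2)) := by
      filter_upwards [h2.eventually (eventually_le_nhds (by norm_num : (0:ℝ) < 1))] with t ht
      linarith
    have := tendsto_atTop_add_right_of_le' _ (-1:ℝ) h1 hev
    exact this.congr (fun t => by ring)
  exact (isPreconnected_Ioi.intermediate_value_Iii
    (le_principal_iff.mpr self_mem_nhdsWithin)
    (le_principal_iff.mpr (Ioi_mem_atTop 0)) hcont hbot htop)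

lemma sq_identity {a b t : ℝ} (ht : 0 < t) :
    (b * t ^ ((1:ℝ)/2) - a * t ^ (-(1:ℝ)/2))^2 = b^2*t + a^2/t - 2*a*b := by
  have h1 : t ^ ((1:ℝ)/2) * t ^ ((1:ℝ)/2) = t := by
    rw [← Real.rpow_add ht]; norm_num
  have h2 : t ^ (-(1:ℝ)/2) * t ^ (-(1:ℝ)/2) = t⁻¹ := by
    rw [← Real.rpow_add ht]; norm_num [Real.rpow_neg_one]
  have h3 : t ^ ((1:ℝ)/2) * t ^ (-(1:ℝ)/2) = 1 := by
    rw [← Real.rpow_add ht]; norm_num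
  have expand : (b * t ^ ((1:ℝ)/2) - a * t ^ (-(1:ℝ)/2))^2
      = b^2*(t ^ ((1:ℝ)/2) * t ^ ((1:ℝ)/2)) - 2*a*b*(t ^ ((1:ℝ)/2) * t ^ (-(1:ℝ)/2))
        + a^2*(t ^ (-(1:ℝ)/2) * t ^ (-(1:ℝ)/2)) := by ring
  rw [expand, h1, h2, h3]
  field_simp
  ring

lemma phiE_integral {a b : ℝ} (ha : 0 < a) (hb : 0 < b) :
    IntegrableOn (fun t : ℝ => ((b/2) * t ^ (-(1:ℝ)/2) + (a/2) * t ^ (-(3:ℝ)/2)) *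
        Real.exp (-(a^2/t + b^2*t))) (Ioi (0:ℝ)) ∧
    ∫ t in Ioi (0:ℝ), ((b/2) * t ^ (-(1:ℝ)/2) + (a/2) * t ^ (-(3:ℝ)/2)) *
        Real.exp (-(a^2/t + b^2*t)) = Real.sqrt π * Real.exp (-(2*a*b)) := by
  set f : ℝ → ℝ := fun t => b * t ^ ((1:ℝ)/2) - a * t ^ (-(1:ℝ)/2) with hf
  set φ : ℝ → ℝ := fun t => (b/2) * t ^ (-(1:ℝ)/2) + (a/2) * t ^ (-(3:ℝ)/2) with hφ
  have hderiv : ∀ t ∈ Ioi (0:ℝ), HasDerivWithinAt f (φ t) (Ioi (0:ℝ)) t :=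
    fun t ht => (hd ha t ht).hasDerivWithinAt
  have hinj : InjOn f (Ioi (0:ℝ)) := (f_mono ha hb).injOn
  have hφpos : ∀ t ∈ Ioi (0:ℝ), 0 < φ t := by
    intro t ht
    have ht' : (0:ℝ) < t := ht
    have := Real.rpow_pos_of_pos ht' (-(1:ℝ)/2)
    have := Real.rpow_pos_of_pos ht' (-(3:ℝ)/2)
    positivity
  have hEeq : ∀ t ∈ Ioi (0:ℝ),
      Real.exp (-(f t)^2) = Real.exp (2*a*b) * Real.exp (-(a^2/t + b^2*t)) := by
    intro t ht
    rw [hf]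
    rw [sq_identity (a := a) (b := b) ht, ← Real.exp_add]
    ring_nf
  -- gaussian integrable
  have hgint : Integrable (fun u : ℝ => Real.exp (-u^2)) := by
    have := integrable_exp_neg_mul_sq (by norm_num : (0:ℝ) < 1)
    simpa using this
  -- integrability
  have hint : IntegrableOn (fun t : ℝ => |φ t| • Real.exp (-(f t)^2)) (Ioi (0:ℝ)) := by
    refine (integrableOn_image_iff_integrableOn_abs_deriv_smul measurableSet_Ioi hderiv hinj
      (fun u => Real.exp (-u^2))).mp ?_
    rw [f_image ha hb]
    exact hgint.integrableOn
  -- value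
  have hval : ∫ t in Ioi (0:ℝ), |φ t| • Real.exp (-(f t)^2) = Real.sqrt π := by
    have himg := integral_image_eq_integral_abs_deriv_smul measurableSet_Ioi hderiv hinj
      (fun u => Real.exp (-u^2))
    rw [f_image ha hb] at himg
    rw [← himg, setIntegral_univ]
    have := integral_gaussian 1
    simpa using this
  -- transfer
  have hcongr : ∀ t ∈ Ioi (0:ℝ), |φ t| • Real.exp (-(f t)^2)
      = Real.exp (2*a*b) * (φ t * Real.exp (-(a^2/t + b^2*t))) := by
    intro t ht
    rw [smul_eq_mul, abs_of_pos (hφpos t ht), hEeq t ht]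
    ring
  have hint2 : IntegrableOn (fun t : ℝ => Real.exp (2*a*b) * (φ t * Real.exp (-(a^2/t + b^2*t))))
      (Ioi (0:ℝ)) := hint.congr_fun hcongr measurableSet_Ioi
  have hintφE : IntegrableOn (fun t : ℝ => φ t * Real.exp (-(a^2/t + b^2*t))) (Ioi (0:ℝ)) := by
    have h3 : IntegrableOn (fun t : ℝ => Real.exp (-(2*a*b)) * (Real.exp (2*a*b) * (φ t * Real.exp (-(a^2/t + b^2*t))))) (Ioi (0:ℝ)) := hint2.const_mul (Real.exp (-(2*a*b)))
    refine IntegrableOn.congr_fun h3 (fun t _ => ?_) measurableSet_Ioi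
    rw [← mul_assoc, ← Real.exp_add]
    simp
  have hval2 : ∫ t in Ioi (0:ℝ), φ t * Real.exp (-(a^2/t + b^2*t))
      = Real.sqrt π * Real.exp (-(2*a*b)) := by
    have e1 : ∫ t in Ioi (0:ℝ), |φ t| • Real.exp (-(f t)^2)
        = ∫ t in Ioi (0:ℝ), Real.exp (2*a*b) * (φ t * Real.exp (-(a^2/t + b^2*t))) :=
      setIntegral_congr_fun measurableSet_Ioi hcongr
    rw [hval, integral_const_mul] at e1
    have hepos := Real.exp_pos (2*a*b)
    rw [Real.exp_neg, e1]
    rw [mul_comm (Real.exp (2*a*b)), mul_inv_cancel_right₀ hepos.ne']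
  exact ⟨hintφE, hval2⟩

lemma E_cont {a b : ℝ} (p : ℝ) : ContinuousOn
    (fun t : ℝ => t ^ p * Real.exp (-(a^2/t + b^2*t))) (Ioi (0:ℝ)) := by
  apply ContinuousOn.mul
  · exact fun t ht => (Real.continuousAt_rpow_const t _ (Or.inl (ne_of_gt ht))).continuousWithinAt
  · apply Real.continuous_exp.comp_continuousOn
    apply ContinuousOn.neg
    apply ContinuousOn.add
    · exact continuousOn_const.div continuousOn_id (fun t ht => ne_of_gt ht)
    · exact (continuous_const.mul continuous_id).continuousOn

lemma E_int {a b : ℝ} (ha : 0 < a) (hb : 0 < b) :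
    IntegrableOn (fun t : ℝ => t ^ (-(3:ℝ)/2) * Real.exp (-(a^2/t + b^2*t))) (Ioi (0:ℝ)) ∧
    IntegrableOn (fun t : ℝ => t ^ (-(1:ℝ)/2) * Real.exp (-(a^2/t + b^2*t))) (Ioi (0:ℝ)) := by
  obtain ⟨hint, -⟩ := phiE_integral ha hb
  constructor
  · refine Integrable.mono' (hint.const_mul (2/a)) ((E_cont _).aestronglyMeasurable measurableSet_Ioi) ?_
    rw [ae_restrict_iff' measurableSet_Ioi]
    refine Eventually.of_forall (fun t ht => ?_)
    have ht' : (0:ℝ) < t := ht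
    have h1 : (0:ℝ) < t ^ (-(1:ℝ)/2) := Real.rpow_pos_of_pos ht' _
    have h3 : (0:ℝ) < t ^ (-(3:ℝ)/2) := Real.rpow_pos_of_pos ht' _
    have hE : (0:ℝ) < Real.exp (-(a^2/t + b^2*t)) := Real.exp_pos _
    rw [Real.norm_eq_abs, abs_of_pos (by positivity)]
    have key : 2/a * ((b / 2 * t ^ (-(1:ℝ)/2) + a / 2 * t ^ (-(3:ℝ)/2)) * Real.exp (-(a^2/t + b^2*t)))
        = (b/a) * (t ^ (-(1:ℝ)/2) * Real.exp (-(a^2/t + b^2*t)))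
          + t ^ (-(3:ℝ)/2) * Real.exp (-(a^2/t + b^2*t)) := by
      field_simp
    rw [key]
    exact le_add_of_nonneg_left (by positivity)
  · refine Integrable.mono' (hint.const_mul (2/b)) ((E_cont _).aestronglyMeasurable measurableSet_Ioi) ?_
    rw [ae_restrict_iff' measurableSet_Ioi]
    refine Eventually.of_forall (fun t ht => ?_)
    have ht' : (0:ℝ) < t := ht
    have h1 : (0:ℝ) < t ^ (-(1:ℝ)/2) := Real.rpow_pos_of_pos ht' _
    have h3 : (0:ℝ) < t ^ (-(3:ℝ)/2) := Real.rpow_pos_of_pos ht' _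
    have hE : (0:ℝ) < Real.exp (-(a^2/t + b^2*t)) := Real.exp_pos _
    rw [Real.norm_eq_abs, abs_of_pos (by positivity)]
    have key : 2/b * ((b / 2 * t ^ (-(1:ℝ)/2) + a / 2 * t ^ (-(3:ℝ)/2)) * Real.exp (-(a^2/t + b^2*t)))
        = t ^ (-(1:ℝ)/2) * Real.exp (-(a^2/t + b^2*t))
          + (a/b) * (t ^ (-(3:ℝ)/2) * Real.exp (-(a^2/t + b^2*t))) := by
      field_simp
    rw [key]
    exact le_add_of_nonneg_right (by positivity)

lemma inv_subst {a b : ℝ} (ha : 0 < a) (hb : 0 < b) :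
    ∫ t in Ioi (0:ℝ), t ^ (-(1:ℝ)/2) * Real.exp (-(a^2/t + b^2*t))
      = (a/b) * ∫ t in Ioi (0:ℝ), t ^ (-(3:ℝ)/2) * Real.exp (-(a^2/t + b^2*t)) := by
  set c : ℝ := a^2/b^2 with hc
  have hcpos : 0 < c := by positivity
  set h : ℝ → ℝ := fun t => t ^ (-(3:ℝ)/2) * Real.exp (-(a^2/t + b^2*t)) with hhdef
  have step1 : ∫ s in Ioi (0:ℝ), h (c * s) = c⁻¹ * ∫ t in Ioi (0:ℝ), h t := by
    have := integral_comp_mul_left_Ioi h 0 hcpos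
    rw [mul_zero] at this
    simpa [smul_eq_mul] using this
  have step2 : (∫ x in Ioi (0:ℝ), (|(-1:ℝ)| * x ^ ((-1:ℝ) - 1)) • h (c * x ^ (-1:ℝ)))
      = ∫ s in Ioi (0:ℝ), h (c * s) :=
    integral_comp_rpow_Ioi (fun s => h (c * s)) (by norm_num)
  have step3 : ∀ x ∈ Ioi (0:ℝ), (|(-1:ℝ)| * x ^ ((-1:ℝ) - 1)) • h (c * x ^ (-1:ℝ))
      = c ^ (-(3:ℝ)/2) * (x ^ (-(1:ℝ)/2) * Real.exp (-(a^2/x + b^2*x))) := by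
    intro x hx
    have hx' : (0:ℝ) < x := hx
    have hxinv : (0:ℝ) < x ^ (-1:ℝ) := Real.rpow_pos_of_pos hx' _
    rw [smul_eq_mul, hhdef]
    dsimp only
    have e1 : (c * x ^ (-1:ℝ)) ^ (-(3:ℝ)/2) = c ^ (-(3:ℝ)/2) * x ^ ((3:ℝ)/2) := by
      rw [Real.mul_rpow hcpos.le hxinv.le, ← Real.rpow_mul hx'.le]
      norm_num
    have e2 : a^2 / (c * x ^ (-1:ℝ)) + b^2 * (c * x ^ (-1:ℝ)) = a^2/x + b^2*x := by
      rw [Real.rpow_neg_one]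
      rw [hc]
      field_simp
      ring
    rw [e1, e2]
    have e3 : |(-1:ℝ)| * x ^ ((-1:ℝ) - 1) = x ^ (-2:ℝ) := by
      norm_num
    rw [e3]
    have e4 : x ^ (-2:ℝ) * (c ^ (-(3:ℝ)/2) * x ^ ((3:ℝ)/2)) = c ^ (-(3:ℝ)/2) * x ^ (-(1:ℝ)/2) := by
      rw [mul_comm (x ^ (-2:ℝ)), mul_assoc, ← Real.rpow_add hx']
      norm_num
    rw [← mul_assoc, e4, mul_assoc]
  have step3' : (∫ x in Ioi (0:ℝ), (|(-1:ℝ)| * x ^ ((-1:ℝ) - 1)) • h (c * x ^ (-1:ℝ)))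
      = c ^ (-(3:ℝ)/2) * ∫ x in Ioi (0:ℝ), x ^ (-(1:ℝ)/2) * Real.exp (-(a^2/x + b^2*x)) := by
    rw [setIntegral_congr_fun measurableSet_Ioi step3, integral_const_mul]
  have chain : c ^ (-(3:ℝ)/2) * (∫ x in Ioi (0:ℝ), x ^ (-(1:ℝ)/2) * Real.exp (-(a^2/x + b^2*x)))
      = c⁻¹ * ∫ t in Ioi (0:ℝ), h t := by
    rw [← step3', step2, step1]
  -- now solve for I₁
  have hpow1 : c ^ ((3:ℝ)/2) * c ^ (-(3:ℝ)/2) = 1 := by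
    rw [← Real.rpow_add hcpos]; norm_num
  have hpow2 : c ^ ((3:ℝ)/2) * c⁻¹ = c ^ ((1:ℝ)/2) := by
    rw [← Real.rpow_neg_one c, ← Real.rpow_add hcpos]; norm_num
  have hcsq : c ^ ((1:ℝ)/2) = a/b := by
    have h2 : c = (a/b) ^ (2:ℕ) := by rw [hc, div_pow]
    rw [h2, ← Real.rpow_natCast (a/b) 2, ← Real.rpow_mul (div_pos ha hb).le]
    norm_num
  have hsolve : (∫ x in Ioi (0:ℝ), x ^ (-(1:ℝ)/2) * Real.exp (-(a^2/x + b^2*x)))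
      = c ^ ((1:ℝ)/2) * ∫ t in Ioi (0:ℝ), h t := by
    linear_combination c ^ ((3:ℝ)/2) * chain
      - (∫ x in Ioi (0:ℝ), x ^ (-(1:ℝ)/2) * Real.exp (-(a^2/x + b^2*x))) * hpow1
      + (∫ t in Ioi (0:ℝ), h t) * hpow2
  rw [hsolve, hcsq]

lemma sub_formula {a b : ℝ} (ha : 0 < a) (hb : 0 < b) :
    ∫ t in Ioi (0:ℝ), t ^ (-(3:ℝ)/2) * Real.exp (-(a^2/t + b^2*t))
      = Real.sqrt π / a * Real.exp (-(2*a*b)) := by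
  obtain ⟨hint, hval⟩ := phiE_integral ha hb
  obtain ⟨hint3, hint1⟩ := E_int ha hb
  have hsplit : ∫ t in Ioi (0:ℝ), ((b/2) * t ^ (-(1:ℝ)/2) + (a/2) * t ^ (-(3:ℝ)/2)) *
      Real.exp (-(a^2/t + b^2*t))
      = (b/2) * (∫ t in Ioi (0:ℝ), t ^ (-(1:ℝ)/2) * Real.exp (-(a^2/t + b^2*t)))
        + (a/2) * ∫ t in Ioi (0:ℝ), t ^ (-(3:ℝ)/2) * Real.exp (-(a^2/t + b^2*t)) := by
    rw [← integral_const_mul, ← integral_const_mul, ← integral_add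
      (hint1.const_mul (b/2)) (hint3.const_mul (a/2))]
    refine setIntegral_congr_fun measurableSet_Ioi (fun t _ => ?_)
    ring
  rw [hsplit, inv_subst ha hb] at hval
  have hane : a ≠ 0 := ha.ne'
  have hbne : b ≠ 0 := hb.ne'
  have e0 : (b/2) * ((a/b) * ∫ t in Ioi (0:ℝ), t ^ (-(3:ℝ)/2) * Real.exp (-(a^2/t + b^2*t)))
      = (a/2) * ∫ t in Ioi (0:ℝ), t ^ (-(3:ℝ)/2) * Real.exp (-(a^2/t + b^2*t)) := by
    field_simp
  rw [e0] at hval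
  rw [div_mul_eq_mul_div, eq_div_iff hane]
  linear_combination hval

lemma hC_one : (4*π) ^ (-(1:ℝ)/2) * (2*Real.sqrt π) = 1 := by
  have h4π : (0:ℝ) < 4*π := by positivity
  have h1 : (4*π) ^ (-(1:ℝ)/2) = (Real.sqrt (4*π))⁻¹ := by
    rw [Real.sqrt_eq_rpow, ← Real.rpow_neg h4π.le]
    norm_num
  have h2 : Real.sqrt (4*π) = 2 * Real.sqrt π := by
    rw [show (4:ℝ)*π = 2^2 * π by ring, Real.sqrt_mul (by positivity), Real.sqrt_sq (by norm_num)]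
  rw [h1, h2]
  have : (0:ℝ) < 2 * Real.sqrt π := by positivity
  field_simp

lemma per_k (x : ℝ) (hx : 0 < x) (k : ℕ) :
    IntegrableOn (fun t : ℝ => (4*π) ^ (-(1:ℝ)/2) * (((k:ℝ)+1) *
      (t ^ (-(3:ℝ)/2) * Real.exp (-((((k:ℝ)+1)/2)^2/t + x^2*t))))) (Ioi (0:ℝ)) ∧
    (∫ t in Ioi (0:ℝ), (4*π) ^ (-(1:ℝ)/2) * (((k:ℝ)+1) *
      (t ^ (-(3:ℝ)/2) * Real.exp (-((((k:ℝ)+1)/2)^2/t + x^2*t))))) =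
      Real.exp (-(((k:ℝ)+1) * x)) := by
  have hK : (0:ℝ) < ((k:ℝ)+1)/2 := by positivity
  obtain ⟨hint3, -⟩ := E_int (a := ((k:ℝ)+1)/2) (b := x) hK hx
  constructor
  · exact (hint3.const_mul _).const_mul _
  · rw [integral_const_mul, integral_const_mul, sub_formula hK hx]
    have e1 : 2 * (((k:ℝ)+1)/2) * x = ((k:ℝ)+1) * x := by ring
    rw [e1]
    have hKne : ((k:ℝ)+1) ≠ 0 := by positivity
    have e2 : Real.sqrt π / (((k:ℝ)+1)/2) = Real.sqrt π * 2 / ((k:ℝ)+1) := div_div_eq_mul_div _ _ _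
    have e3 : ((k:ℝ)+1) * (Real.sqrt π * 2 / ((k:ℝ)+1) * Real.exp (-(((k:ℝ)+1) * x)))
        = 2 * Real.sqrt π * Real.exp (-(((k:ℝ)+1) * x)) := by
      field_simp
    rw [e2, e3, ← mul_assoc, hC_one, one_mul]

lemma geom_sum_exp {x : ℝ} (hx : 0 < x) :
    ∑' k : ℕ, Real.exp (-(((k:ℝ)+1) * x)) = 1 / (Real.exp x - 1) := by
  have hr0 : (0:ℝ) ≤ Real.exp (-x) := (Real.exp_pos _).le
  have hr1 : Real.exp (-x) < 1 := by
    rw [Real.exp_lt_one_iff]  -- guess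
    linarith
  have hterm : ∀ k : ℕ, Real.exp (-(((k:ℝ)+1) * x)) = Real.exp (-x) * Real.exp (-x) ^ k := by
    intro k
    rw [← Real.exp_nat_mul, ← Real.exp_add]
    congr 1
    ring
  rw [tsum_congr hterm, tsum_mul_left, tsum_geometric_of_lt_one hr0 hr1]
  have he1 : (1:ℝ) < Real.exp x := by
    have := Real.exp_lt_exp.mpr hx
    simpa using this
  have h1 : 1 - Real.exp (-x) ≠ 0 := by linarith
  have h2 : Real.exp x - 1 ≠ 0 := by linarith
  have h3 : Real.exp x ≠ 0 := Real.exp_ne_zero x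
  field_simp [Real.exp_neg]
  rw [mul_sub, ← Real.exp_add]
  simp

/-- Heat kernel representation of the Bose distribution. -/
theorem bose_heat_representation (x : ℝ) (hx : 0 < x) :
    1 / (Real.exp x - 1) =
      ∫ t in Set.Ioi (0 : ℝ),
        ((4 * π) ^ (-(1 : ℝ) / 2) * t ^ (-(3 : ℝ) / 2) *
          ∑' k : ℕ, ((k : ℝ) + 1) * Real.exp (-((k : ℝ) + 1) ^ 2 / (4 * t))) *
        Real.exp (-t * x ^ 2) := by
  set g : ℕ → ℝ → ℝ := fun k t => (4*π) ^ (-(1:ℝ)/2) * (((k:ℝ)+1) *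
      (t ^ (-(3:ℝ)/2) * Real.exp (-((((k:ℝ)+1)/2)^2/t + x^2*t)))) with hg
  have hpt : ∀ t : ℝ,
      ((4 * π) ^ (-(1 : ℝ) / 2) * t ^ (-(3 : ℝ) / 2) *
          ∑' k : ℕ, ((k : ℝ) + 1) * Real.exp (-((k : ℝ) + 1) ^ 2 / (4 * t))) *
        Real.exp (-t * x ^ 2) = ∑' k : ℕ, g k t := by
    intro t
    rw [← tsum_mul_left (a := (4*π) ^ (-(1:ℝ)/2) * t ^ (-(3:ℝ)/2)), ← tsum_mul_right]
    refine tsum_congr (fun k => ?_)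
    rw [hg]
    dsimp only
    have harg : -((k:ℝ)+1)^2/(4*t) + -t*x^2 = -((((k:ℝ)+1)/2)^2/t + x^2*t) := by
      ring
    calc (4*π) ^ (-(1:ℝ)/2) * t ^ (-(3:ℝ)/2) * (((k:ℝ)+1) * Real.exp (-((k:ℝ)+1)^2/(4*t)))
          * Real.exp (-t*x^2)
        = (4*π) ^ (-(1:ℝ)/2) * (((k:ℝ)+1) *
            (t ^ (-(3:ℝ)/2) * (Real.exp (-((k:ℝ)+1)^2/(4*t)) * Real.exp (-t*x^2)))) := by ring
      _ = _ := by rw [← Real.exp_add, harg]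
  have hmeas : ∀ k : ℕ, AEStronglyMeasurable (g k) (volume.restrict (Ioi (0:ℝ))) := by
    intro k
    refine ContinuousOn.aestronglyMeasurable ?_ measurableSet_Ioi
    exact continuousOn_const.mul (continuousOn_const.mul
      (E_cont (a := ((k:ℝ)+1)/2) (b := x) (-(3:ℝ)/2)))
  have hgpos : ∀ k : ℕ, ∀ t ∈ Ioi (0:ℝ), 0 ≤ g k t := by
    intro k t ht
    have ht' : (0:ℝ) < t := ht
    have hc : (0:ℝ) < (4*π) ^ (-(1:ℝ)/2) := Real.rpow_pos_of_pos (by positivity) _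
    have h3 : (0:ℝ) < t ^ (-(3:ℝ)/2) := Real.rpow_pos_of_pos ht' _
    rw [hg]
    positivity
  have hsummable : Summable (fun k : ℕ => Real.exp (-(((k:ℝ)+1) * x))) := by
    have hterm : ∀ k : ℕ, Real.exp (-(((k:ℝ)+1) * x)) = Real.exp (-x) * Real.exp (-x) ^ k := by
      intro k
      rw [← Real.exp_nat_mul, ← Real.exp_add]
      congr 1
      ring
    have hr1 : Real.exp (-x) < 1 := by
      rw [Real.exp_lt_one_iff]
      linarith
    have := (summable_geometric_of_lt_one (Real.exp_pos (-x)).le hr1).mul_left (Real.exp (-x))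
    exact this.congr (fun k => (hterm k).symm)
  have hnorm : ∀ k : ℕ, ∫⁻ t, ‖g k t‖₊ ∂(volume.restrict (Ioi (0:ℝ)))
      = ENNReal.ofReal (Real.exp (-(((k:ℝ)+1) * x))) := by
    intro k
    simp only [← enorm_eq_nnnorm]
    rw [← ofReal_integral_norm_eq_lintegral_enorm (per_k x hx k).1]
    congr 1
    rw [show (∫ t in Ioi (0:ℝ), ‖g k t‖) = ∫ t in Ioi (0:ℝ), g k t from
      setIntegral_congr_fun measurableSet_Ioi (fun t ht => norm_of_nonneg (hgpos k t ht))]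
    exact (per_k x hx k).2
  have hne : ∑' k : ℕ, ∫⁻ t, ‖g k t‖₊ ∂(volume.restrict (Ioi (0:ℝ))) ≠ ⊤ := by
    rw [tsum_congr hnorm]
    rw [← ENNReal.ofReal_tsum_of_nonneg (fun k => (Real.exp_pos _).le) hsummable]
    exact ENNReal.ofReal_ne_top
  calc 1 / (Real.exp x - 1) = ∑' k : ℕ, Real.exp (-(((k:ℝ)+1) * x)) := (geom_sum_exp hx).symm
    _ = ∑' k : ℕ, ∫ t in Ioi (0:ℝ), g k t := by
        refine tsum_congr (fun k => ?_)
        exact ((per_k x hx k).2).symm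
    _ = ∫ t in Ioi (0:ℝ), ∑' k : ℕ, g k t := (integral_tsum hmeas hne).symm
    _ = _ := by
        refine setIntegral_congr_fun measurableSet_Ioi (fun t _ => ?_)
        exact (hpt t).symm
end

section
/- Let (ω_k^+)_{k≥1} and (ω_k^-)_{k≥1} be sequences of positive reals and β > 0. Then for each k, the quantity [E_f(βω_k^+) - E_f(βω_k^-)]·[E_b(βω_k^+) - E_b(βω_k^-)] equals sinh²(β(ω_k^+ - ω_k^-)/2) / (sinh(βω_k^+)·sinh(βω_k^-)), where E_f(x)=1/(e^x+1), E_b(x)=1/(e^x-1). -/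
lemma bog_poly (u v : ℝ) (hu : 1 < u) (hv : 1 < v) :
    (1 / (u*u + 1) - 1 / (v*v + 1)) * (1 / (u*u - 1) - 1 / (v*v - 1)) =
    ((u/v - v/u)/2)^2 / (((u*u - (u*u)⁻¹)/2) * ((v*v - (v*v)⁻¹)/2)) := by
  have hu0 : u ≠ 0 := by positivity
  have hv0 : v ≠ 0 := by positivity
  have h1 : u*u - 1 ≠ 0 := by nlinarith
  have h2 : v*v - 1 ≠ 0 := by nlinarith
  have h3 : u*u + 1 ≠ 0 := by positivity
  have h4 : v*v + 1 ≠ 0 := by positivity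
  have huu : 1 < u*u := by nlinarith
  have hvv : 1 < v*v := by nlinarith
  have h5 : u*u*(u*u) - 1 ≠ 0 := by nlinarith
  have h6 : v*v*(v*v) - 1 ≠ 0 := by nlinarith
  have e5 : u*u - (u*u)⁻¹ = (u*u*(u*u) - 1)/(u*u) := by
    field_simp
  have e6 : v*v - (v*v)⁻¹ = (v*v*(v*v) - 1)/(v*v) := by
    field_simp
  rw [e5, e6]
  have h1' : u^2 - 1 ≠ 0 := by nlinarith
  have h2' : v^2 - 1 ≠ 0 := by nlinarith
  have h5' : u^4 - 1 ≠ 0 := by nlinarith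
  have h6' : v^4 - 1 ≠ 0 := by nlinarith
  field_simp
  ring

lemma bog_aux (x y : ℝ) (hx : 0 < x) (hy : 0 < y) :
    (1 / (Real.exp x + 1) - 1 / (Real.exp y + 1)) *
      (1 / (Real.exp x - 1) - 1 / (Real.exp y - 1)) =
    Real.sinh ((x - y) / 2) ^ 2 / (Real.sinh x * Real.sinh y) := by
  have hex : Real.exp x = Real.exp (x/2) * Real.exp (x/2) := by
    rw [← Real.exp_add]; ring_nf
  have hey : Real.exp y = Real.exp (y/2) * Real.exp (y/2) := by
    rw [← Real.exp_add]; ring_nf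
  have hu : 1 < Real.exp (x/2) := Real.one_lt_exp_iff.mpr (by linarith)
  have hv : 1 < Real.exp (y/2) := Real.one_lt_exp_iff.mpr (by linarith)
  have h1 : Real.exp ((x - y)/2) = Real.exp (x/2) / Real.exp (y/2) := by
    rw [← Real.exp_sub]; ring_nf
  have h2 : Real.exp (-((x - y)/2)) = Real.exp (y/2) / Real.exp (x/2) := by
    rw [← Real.exp_sub]; ring_nf
  rw [Real.sinh_eq, Real.sinh_eq, Real.sinh_eq, h1, h2,
    Real.exp_neg x, Real.exp_neg y, hex, hey]
  exact bog_poly _ _ hu hv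

/-- Pointwise identity for the bosonic Bogolyubov invariant with equal eigenprojections. -/
theorem bogolyubov_term_eq (ωp ωm : ℕ → ℝ) (hωp : ∀ k, 0 < ωp k) (hωm : ∀ k, 0 < ωm k)
    (β : ℝ) (hβ : 0 < β) (k : ℕ) :
    (1 / (Real.exp (β * ωp k) + 1) - 1 / (Real.exp (β * ωm k) + 1)) *
      (1 / (Real.exp (β * ωp k) - 1) - 1 / (Real.exp (β * ωm k) - 1)) =
    Real.sinh (β * (ωp k - ωm k) / 2) ^ 2 /
      (Real.sinh (β * ωp k) * Real.sinh (β * ωm k)) := by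
  have h := bog_aux (β * ωp k) (β * ωm k) (mul_pos hβ (hωp k)) (mul_pos hβ (hωm k))
  have e : β * (ωp k - ωm k) / 2 = (β * ωp k - β * ωm k) / 2 := by ring
  rw [e]
  exact h
end

section
/- Let f : (0,∞) → ℝ be defined by f(t) = (4π)^{-1/2} t^{-3/2} ∑_{k=1}^∞ k e^{-k²/(4t)} (the function h_b). Then t^{3/2} e^{1/(4t)} f(t) → (4π)^{-1/2} as t → 0⁺; in particular f(t) → 0 as t → 0⁺. -/
open Real Filter

lemma hb_sum_tendsto :
    Tendsto (fun t : ℝ => ∑' k : ℕ,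
        ((k : ℝ) + 1) * Real.exp ((1 - ((k : ℝ) + 1) ^ 2) / (4 * t)))
      (nhdsWithin 0 (Set.Ioi 0)) (nhds 1) := by
  have hsum : Summable (fun k : ℕ => ((k : ℝ) + 1) * Real.exp (-1) ^ k) := by
    have h1 : Summable (fun k : ℕ => (k : ℝ) * Real.exp (-1) ^ k) := by
      have := summable_pow_mul_geometric_of_norm_lt_one (R := ℝ) 1
        (r := Real.exp (-1)) (by
          rw [Real.norm_eq_abs, abs_of_pos (Real.exp_pos _)]
          exact Real.exp_lt_one_iff.mpr (by norm_num))
      simpa using this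
    have h2 : Summable (fun k : ℕ => Real.exp (-1) ^ k) :=
      summable_geometric_of_lt_one (Real.exp_pos _).le
        (Real.exp_lt_one_iff.mpr (by norm_num))
    simpa [add_mul] using h1.add h2
  have key := tendsto_tsum_of_dominated_convergence
    (𝓕 := nhdsWithin (0:ℝ) (Set.Ioi 0))
    (f := fun (t : ℝ) (k : ℕ) => ((k : ℝ) + 1) * Real.exp ((1 - ((k : ℝ) + 1) ^ 2) / (4 * t)))
    (g := fun k : ℕ => if k = 0 then (1:ℝ) else 0)
    (bound := fun k : ℕ => ((k : ℝ) + 1) * Real.exp (-1) ^ k)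
    hsum ?_ ?_
  · have h0 : (∑' k : ℕ, (if k = 0 then (1:ℝ) else 0)) = 1 := by
      simpa using tsum_ite_eq (0 : ℕ) (1 : ℝ)
    rwa [h0] at key
  · intro k
    rcases Nat.eq_zero_or_pos k with hk | hk
    · subst hk
      simp
    · have hk1 : (1:ℝ) ≤ (k : ℝ) := by exact_mod_cast hk
      have hc : (0:ℝ) < (((k : ℝ) + 1) ^ 2 - 1) / 4 := by nlinarith
      have hx : Tendsto (fun t : ℝ => t⁻¹) (nhdsWithin 0 (Set.Ioi 0)) atTop :=
        tendsto_inv_nhdsGT_zero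
      have h1 : Tendsto (fun t : ℝ => (((k : ℝ) + 1) ^ 2 - 1) / 4 * t⁻¹)
          (nhdsWithin 0 (Set.Ioi 0)) atTop := hx.const_mul_atTop hc
      have h2 : Tendsto (fun t : ℝ => (1 - ((k : ℝ) + 1) ^ 2) / (4 * t))
          (nhdsWithin 0 (Set.Ioi 0)) atBot := by
        have heq : ∀ t : ℝ, (1 - ((k : ℝ) + 1) ^ 2) / (4 * t)
            = -((((k : ℝ) + 1) ^ 2 - 1) / 4 * t⁻¹) := by
          intro t
          rw [div_eq_mul_inv, mul_inv, div_eq_mul_inv]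
          ring
        simpa only [heq, Function.comp_def] using tendsto_neg_atTop_atBot.comp h1
      have h3 := Real.tendsto_exp_atBot.comp h2
      have h4 : Tendsto (fun t : ℝ =>
          ((k : ℝ) + 1) * Real.exp ((1 - ((k : ℝ) + 1) ^ 2) / (4 * t)))
          (nhdsWithin 0 (Set.Ioi 0)) (nhds (((k : ℝ) + 1) * 0)) :=
        tendsto_const_nhds.mul h3
      simpa [Nat.pos_iff_ne_zero.mp hk] using h4
  · filter_upwards [Ioo_mem_nhdsGT_of_mem
      (show (0:ℝ) ∈ Set.Ico (0:ℝ) (1/2) by norm_num)] with t ht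
    intro k
    have ht0 : 0 < t := ht.1
    have ht2 : t < 1/2 := ht.2
    have hkn : (0:ℝ) ≤ (k : ℝ) := Nat.cast_nonneg k
    have hexp : (1 - ((k : ℝ) + 1) ^ 2) / (4 * t) ≤ -(k : ℝ) := by
      rw [div_le_iff₀ (by linarith : (0:ℝ) < 4 * t)]
      nlinarith [mul_nonneg hkn (by linarith : (0:ℝ) ≤ 1 - 2 * t)]
    have hpow : Real.exp (-1) ^ k = Real.exp (-(k:ℝ)) := by
      rw [← Real.exp_nat_mul]; ring_nf
    calc ‖((k : ℝ) + 1) * Real.exp ((1 - ((k : ℝ) + 1) ^ 2) / (4 * t))‖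
        = ((k : ℝ) + 1) * Real.exp ((1 - ((k : ℝ) + 1) ^ 2) / (4 * t)) := by
          rw [Real.norm_eq_abs, abs_of_nonneg (by positivity)]
      _ ≤ ((k : ℝ) + 1) * Real.exp (-(k:ℝ)) := by
          gcongr
      _ = ((k : ℝ) + 1) * Real.exp (-1) ^ k := by rw [hpow]

/-- Small-t asymptotics of h_b: h_b(t) ~ (4π)^{-1/2} t^{-3/2} e^{-1/(4t)} as t → 0⁺. -/
theorem hb_small_t (f : ℝ → ℝ)
    (hf : ∀ t > 0, f t =
      (4 * π) ^ (-(1 : ℝ) / 2) * t ^ (-(3 : ℝ) / 2) *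
        ∑' k : ℕ, ((k : ℝ) + 1) * Real.exp (-((k : ℝ) + 1) ^ 2 / (4 * t))) :
    Tendsto (fun t => t ^ ((3 : ℝ) / 2) * Real.exp (1 / (4 * t)) * f t)
        (nhdsWithin 0 (Set.Ioi 0)) (nhds ((4 * π) ^ (-(1 : ℝ) / 2))) ∧
    Tendsto f (nhdsWithin 0 (Set.Ioi 0)) (nhds 0) := by
  have heq : ∀ᶠ t in nhdsWithin (0:ℝ) (Set.Ioi 0),
      t ^ ((3 : ℝ) / 2) * Real.exp (1 / (4 * t)) * f t
      = (4 * π) ^ (-(1 : ℝ) / 2) * ∑' k : ℕ,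
          ((k : ℝ) + 1) * Real.exp ((1 - ((k : ℝ) + 1) ^ 2) / (4 * t)) := by
    filter_upwards [self_mem_nhdsWithin] with t ht
    have ht0 : (0:ℝ) < t := ht
    rw [hf t ht0]
    have hrp : t ^ ((3 : ℝ) / 2) * t ^ (-(3 : ℝ) / 2) = 1 := by
      rw [← Real.rpow_add ht0]
      norm_num
    have hsum : Real.exp (1 / (4 * t)) *
        (∑' k : ℕ, ((k : ℝ) + 1) * Real.exp (-((k : ℝ) + 1) ^ 2 / (4 * t)))
        = ∑' k : ℕ, ((k : ℝ) + 1) * Real.exp ((1 - ((k : ℝ) + 1) ^ 2) / (4 * t)) := by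
      rw [← tsum_mul_left]
      congr 1
      ext k
      rw [show Real.exp (1 / (4 * t)) * (((k : ℝ) + 1) *
          Real.exp (-((k : ℝ) + 1) ^ 2 / (4 * t)))
          = ((k : ℝ) + 1) * (Real.exp (1 / (4 * t)) *
            Real.exp (-((k : ℝ) + 1) ^ 2 / (4 * t))) by ring,
        ← Real.exp_add]
      congr 2
      field_simp
      ring
    calc t ^ ((3 : ℝ) / 2) * Real.exp (1 / (4 * t)) *
          ((4 * π) ^ (-(1 : ℝ) / 2) * t ^ (-(3 : ℝ) / 2) *
            ∑' k : ℕ, ((k : ℝ) + 1) * Real.exp (-((k : ℝ) + 1) ^ 2 / (4 * t)))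
        = (t ^ ((3 : ℝ) / 2) * t ^ (-(3 : ℝ) / 2)) * ((4 * π) ^ (-(1 : ℝ) / 2) *
            (Real.exp (1 / (4 * t)) *
              ∑' k : ℕ, ((k : ℝ) + 1) * Real.exp (-((k : ℝ) + 1) ^ 2 / (4 * t)))) := by
          ring
      _ = (4 * π) ^ (-(1 : ℝ) / 2) * ∑' k : ℕ,
            ((k : ℝ) + 1) * Real.exp ((1 - ((k : ℝ) + 1) ^ 2) / (4 * t)) := by
          rw [hrp, hsum, one_mul]
  have hA : Tendsto (fun t => t ^ ((3 : ℝ) / 2) * Real.exp (1 / (4 * t)) * f t)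
      (nhdsWithin 0 (Set.Ioi 0)) (nhds ((4 * π) ^ (-(1 : ℝ) / 2))) := by
    have := (tendsto_const_nhds (x := (4 * π) ^ (-(1 : ℝ) / 2))
      (f := nhdsWithin (0:ℝ) (Set.Ioi 0))).mul hb_sum_tendsto
    rw [mul_one] at this
    exact this.congr' (heq.mono fun t h => h.symm)
  refine ⟨hA, ?_⟩
  have hB : Tendsto (fun t : ℝ => t ^ (-(3 : ℝ) / 2) * Real.exp (-(1 / (4 * t))))
      (nhdsWithin 0 (Set.Ioi 0)) (nhds 0) := by
    have hcomp := (tendsto_rpow_mul_exp_neg_mul_atTop_nhds_zero ((3:ℝ)/2) (1/4)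
      (by norm_num)).comp tendsto_inv_nhdsGT_zero
    apply Tendsto.congr' _ hcomp
    filter_upwards [self_mem_nhdsWithin] with t ht
    have ht0 : (0:ℝ) < t := ht
    simp only [Function.comp]
    rw [Real.inv_rpow ht0.le, ← Real.rpow_neg ht0.le]
    congr 1
    · norm_num
    · congr 1
      field_simp
  have hprod := hA.mul hB
  rw [mul_zero] at hprod
  apply Tendsto.congr' _ hprod
  filter_upwards [self_mem_nhdsWithin] with t ht
  have ht0 : (0:ℝ) < t := ht
  have h1 : t ^ ((3 : ℝ) / 2) * t ^ (-(3 : ℝ) / 2) = 1 := by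
    rw [← Real.rpow_add ht0]; norm_num
  have h2 : Real.exp (1 / (4 * t)) * Real.exp (-(1 / (4 * t))) = 1 := by
    rw [← Real.exp_add]; norm_num
  calc t ^ ((3 : ℝ) / 2) * Real.exp (1 / (4 * t)) * f t *
        (t ^ (-(3 : ℝ) / 2) * Real.exp (-(1 / (4 * t))))
      = (t ^ ((3 : ℝ) / 2) * t ^ (-(3 : ℝ) / 2)) *
        (Real.exp (1 / (4 * t)) * Real.exp (-(1 / (4 * t)))) * f t := by ring
    _ = f t := by rw [h1, h2]; ring
end

section
/- As t → ∞, the function h_b(t) = (4π)^{-1/2} t^{-3/2} ∑_{k=1}^∞ k e^{-k²/(4t)} satisfies h_b(t)·√(π t) → 1, i.e., h_b(t) ~ π^{-1/2} t^{-1/2}. -/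
open Real Filter

private lemma hb_exp_le_geom (t : ℝ) (ht : 0 < t) (k : ℕ) :
    Real.exp (-(k:ℝ)^2/(4*t)) ≤ Real.exp (-(1:ℝ)/(4*t)) ^ k := by
  rw [← Real.exp_nat_mul]
  apply Real.exp_le_exp.2
  have hk : (k:ℝ) ≤ (k:ℝ)^2 := by exact_mod_cast Nat.le_self_pow two_ne_zero k
  rw [div_le_iff₀ (by positivity)]
  have : (k:ℝ) * (-1 / (4*t)) * (4*t) = -(k:ℝ) := by field_simp
  rw [this]
  linarith

private lemma hb_summable_master (t : ℝ) (ht : 0 < t) :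
    Summable (fun k : ℕ => ((k:ℝ)+1) * Real.exp (-(k:ℝ)^2/(4*t))) := by
  set r := Real.exp (-(1:ℝ)/(4*t)) with hr
  have hr0 : 0 < r := Real.exp_pos _
  have hr1 : r < 1 := by
    rw [hr, Real.exp_lt_one_iff]
    have : 0 < 4 * t := by positivity
    exact div_neg_of_neg_of_pos (by norm_num) this
  have hs : Summable (fun k : ℕ => ((k:ℝ)+1) * r ^ k) := by
    have h1 := summable_pow_mul_geometric_of_norm_lt_one 1
      (r := r) (by rw [Real.norm_eq_abs, abs_of_pos hr0]; exact hr1)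
    have h2 := summable_geometric_of_lt_one hr0.le hr1
    have := h1.add h2
    simpa [add_mul, pow_one] using this
  apply Summable.of_nonneg_of_le (fun k => by positivity) _ hs
  intro k
  exact mul_le_mul_of_nonneg_left (hb_exp_le_geom t ht k) (by positivity)

private lemma hb_A_bounds (t : ℝ) (ht : 0 < t) :
    2*t - (∑' k : ℕ, Real.exp (-(k:ℝ)^2/(4*t)))
      ≤ (∑' k : ℕ, ((k:ℝ)+1) * Real.exp (-((k:ℝ)+1) ^ 2 / (4 * t)))
    ∧ (∑' k : ℕ, ((k:ℝ)+1) * Real.exp (-((k:ℝ)+1) ^ 2 / (4 * t)))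
      ≤ 2*t + (∑' k : ℕ, Real.exp (-(k:ℝ)^2/(4*t))) := by
  set g : ℕ → ℝ := fun k => Real.exp (-(k:ℝ)^2/(4*t)) with hg
  have hgpos : ∀ k, 0 < g k := fun k => Real.exp_pos _
  have hgs : ∀ k : ℕ, Real.exp (-((k:ℝ)+1) ^ 2 / (4 * t)) = g (k+1) := by
    intro k; simp only [hg]; congr 2; push_cast; ring
  -- summabilities
  have hU : Summable (fun k : ℕ => ((k:ℝ)+1) * g k) := hb_summable_master t ht
  have hT : Summable g := by
    apply Summable.of_nonneg_of_le (fun k => (hgpos k).le) _ hU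
    intro k
    nlinarith [hgpos k, Nat.cast_nonneg (α := ℝ) k]
  have hT' : Summable (fun k : ℕ => g (k+1)) := (summable_nat_add_iff 1).2 hT
  have hU' : Summable (fun k : ℕ => ((k:ℝ)+1+1) * g (k+1)) := by
    have := (summable_nat_add_iff (f := fun k : ℕ => ((k:ℝ)+1) * g k) 1).2 hU
    apply this.congr
    intro k; push_cast; ring
  have hA : Summable (fun k : ℕ => ((k:ℝ)+1) * g (k+1)) := by
    apply Summable.of_nonneg_of_le (fun k => by positivity) _ hU'
    intro k
    nlinarith [hgpos (k+1), Nat.cast_nonneg (α := ℝ) k]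
  have hV : Summable (fun k : ℕ => (k:ℝ) * g (k+1)) := by
    apply Summable.of_nonneg_of_le (fun k => by positivity) _ hA
    intro k
    nlinarith [hgpos (k+1), Nat.cast_nonneg (α := ℝ) k]
  have hkg : Summable (fun k : ℕ => (k:ℝ) * g k) := by
    apply Summable.of_nonneg_of_le (fun k => by positivity) _ hU
    intro k
    nlinarith [hgpos k, Nat.cast_nonneg (α := ℝ) k]
  have hD : Summable (fun k : ℕ => g k - g (k+1)) := hT.sub hT'
  -- telescoping: tsum of differences is 1
  have hg0 : g 0 = 1 := by simp [hg]
  have hgtend : Tendsto g atTop (nhds 0) := by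
    have h1 : Tendsto (fun n : ℕ => -((n:ℝ)^2/(4*t))) atTop atBot := by
      apply tendsto_neg_atTop_atBot.comp
      apply Tendsto.atTop_div_const (by positivity)
      exact (tendsto_pow_atTop two_ne_zero).comp tendsto_natCast_atTop_atTop
    have := Real.tendsto_exp_atBot.comp h1
    apply this.congr
    intro n; simp [hg, neg_div]
  have hD1 : (∑' k : ℕ, (g k - g (k+1))) = 1 := by
    have h2 := hD.hasSum.tendsto_sum_nat
    have h3 : Tendsto (fun n => ∑ i ∈ Finset.range n, (g i - g (i+1))) atTop (nhds 1) := by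
      have heq : ∀ n, ∑ i ∈ Finset.range n, (g i - g (i+1)) = 1 - g n := by
        intro n; rw [Finset.sum_range_sub' g n, hg0]
      rw [show (1:ℝ) = 1 - 0 by ring]
      exact Tendsto.congr (fun n => (heq n).symm) (tendsto_const_nhds.sub hgtend)
    exact tendsto_nhds_unique h2 h3
  -- pointwise bounds
  have hgmul : ∀ k : ℕ, g (k+1) = g k * Real.exp (-((2*(k:ℝ)+1)/(4*t))) := by
    intro k
    simp only [hg, ← Real.exp_add]
    congr 1
    have h4 : (4:ℝ)*t ≠ 0 := by positivity
    push_cast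
    field_simp
    ring
  have upper_pt : ∀ k : ℕ, 2*t*(g k - g (k+1)) ≤ ((k:ℝ)+1) * g k := by
    intro k
    rw [hgmul k]
    have h1 := Real.add_one_le_exp (-((2*(k:ℝ)+1)/(4*t)))
    have h2 : 1 - Real.exp (-((2*(k:ℝ)+1)/(4*t))) ≤ (2*(k:ℝ)+1)/(4*t) := by linarith
    have h3 : (1 - Real.exp (-((2*(k:ℝ)+1)/(4*t)))) * (4*t) ≤ 2*(k:ℝ)+1 := by
      rw [← le_div_iff₀ (by positivity)]; exact h2
    nlinarith [hgpos k, Nat.cast_nonneg (α := ℝ) k]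
  have lower_pt : ∀ k : ℕ, (k:ℝ) * g (k+1) ≤ 2*t*(g k - g (k+1)) := by
    intro k
    have hgmul' : g k = g (k+1) * Real.exp ((2*(k:ℝ)+1)/(4*t)) := by
      rw [hgmul k, mul_assoc, ← Real.exp_add]
      simp
    rw [hgmul']
    have h1 := Real.add_one_le_exp ((2*(k:ℝ)+1)/(4*t))
    have h3 : 2*(k:ℝ)+1 ≤ (Real.exp ((2*(k:ℝ)+1)/(4*t)) - 1) * (4*t) := by
      rw [← div_le_iff₀ (by positivity)]; linarith
    nlinarith [hgpos (k+1), Nat.cast_nonneg (α := ℝ) k]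
  -- summed bounds
  have hDsum : (∑' k : ℕ, 2*t*(g k - g (k+1))) = 2*t := by
    rw [tsum_mul_left, hD1, mul_one]
  have hupper : 2*t ≤ ∑' k : ℕ, ((k:ℝ)+1) * g k := by
    rw [← hDsum]
    exact Summable.tsum_le_tsum upper_pt (hD.mul_left (2*t)) hU
  have hlower : (∑' k : ℕ, (k:ℝ) * g (k+1)) ≤ 2*t := by
    rw [← hDsum]
    exact Summable.tsum_le_tsum lower_pt hV (hD.mul_left (2*t))
  -- splitting identities
  have hUsplit : (∑' k : ℕ, ((k:ℝ)+1) * g k)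
      = (∑' k : ℕ, (k:ℝ) * g k) + ∑' k : ℕ, g k := by
    rw [← hkg.tsum_add hT]
    exact tsum_congr (fun k => by ring)
  have hshift : (∑' k : ℕ, (k:ℝ) * g k) = ∑' k : ℕ, ((k:ℝ)+1) * g (k+1) := by
    rw [hkg.tsum_eq_zero_add]
    push_cast
    simp
  have hAsplit : (∑' k : ℕ, (k:ℝ) * g (k+1))
      = (∑' k : ℕ, ((k:ℝ)+1) * g (k+1)) - ∑' k : ℕ, g (k+1) := by
    rw [← hA.tsum_sub hT']
    exact tsum_congr (fun k => by ring)
  have hTsplit : (∑' k : ℕ, g k) = 1 + ∑' k : ℕ, g (k+1) := by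
    rw [hT.tsum_eq_zero_add, hg0]
  -- conclude
  have hstmt : (∑' k : ℕ, ((k:ℝ)+1) * Real.exp (-((k:ℝ)+1) ^ 2 / (4 * t)))
      = ∑' k : ℕ, ((k:ℝ)+1) * g (k+1) := tsum_congr (fun k => by rw [hgs k])
  rw [hstmt]
  constructor
  · linarith [hupper, hUsplit, hshift]
  · linarith [hlower, hAsplit, hTsplit]

private lemma hb_T_bound (t : ℝ) (ht : 1 ≤ t) :
    (∑' k : ℕ, Real.exp (-(k:ℝ)^2/(4*t))) ≤ 4*Real.sqrt t + 2 := by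
  have ht0 : 0 < t := lt_of_lt_of_le one_pos ht
  set s := Real.sqrt t with hs
  have hs1 : 1 ≤ s := Real.one_le_sqrt.2 ht
  have hs0 : 0 < s := lt_of_lt_of_le one_pos hs1
  have hss : s * s = t := Real.mul_self_sqrt ht0.le
  set m := ⌈2*s⌉₊ with hmdef
  have hm : 2*s ≤ (m:ℝ) := Nat.le_ceil _
  have hm' : (m:ℝ) ≤ 2*s + 1 := (Nat.ceil_lt_add_one (by positivity)).le
  have hT : Summable (fun k : ℕ => Real.exp (-(k:ℝ)^2/(4*t))) := by
    apply Summable.of_nonneg_of_le (fun k => (Real.exp_pos _).le) _ (hb_summable_master t ht0)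
    intro k
    nlinarith [(Real.exp_pos (-(k:ℝ)^2/(4*t))), Nat.cast_nonneg (α := ℝ) k]
  rw [← hT.sum_add_tsum_nat_add m]
  have h1 : (∑ i ∈ Finset.range m, Real.exp (-(i:ℝ)^2/(4*t))) ≤ m := by
    calc (∑ i ∈ Finset.range m, Real.exp (-(i:ℝ)^2/(4*t)))
        ≤ ∑ _i ∈ Finset.range m, (1:ℝ) := by
          apply Finset.sum_le_sum
          intro i _
          apply Real.exp_le_one_iff.2
          rw [neg_div]
          exact neg_nonpos.2 (by positivity)
      _ = m := by simp
  set r := Real.exp (-(1/(2*s))) with hrdef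
  have hr0 : 0 < r := Real.exp_pos _
  have hr1 : r < 1 := by
    rw [hrdef, Real.exp_lt_one_iff]
    have : (0:ℝ) < 1/(2*s) := by positivity
    linarith
  have hle : ∀ i : ℕ, Real.exp (-((i + m : ℕ):ℝ)^2/(4*t)) ≤ r ^ i := by
    intro i
    rw [hrdef, ← Real.exp_nat_mul]
    apply Real.exp_le_exp.2
    have hx : ((i + m : ℕ):ℝ) = (i:ℝ) + m := by push_cast; ring
    rw [hx]
    have h5 : 2*s ≤ (i:ℝ) + m := by
      have := Nat.cast_nonneg (α := ℝ) i; linarith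
    have h7 : (i:ℝ) * -(1/(2*s)) = -(2*s*(i:ℝ))/(4*t) := by
      rw [← hss]; field_simp; ring
    rw [h7, div_le_div_iff_of_pos_right (by positivity)]
    have hi0 : (0:ℝ) ≤ (i:ℝ) := Nat.cast_nonneg _
    nlinarith
  have htail : (∑' i : ℕ, Real.exp (-((i + m : ℕ):ℝ)^2/(4*t))) ≤ 2*s + 1 := by
    have hsumtail : Summable (fun i : ℕ => Real.exp (-((i + m : ℕ):ℝ)^2/(4*t))) :=
      (summable_nat_add_iff (f := fun k : ℕ => Real.exp (-(k:ℝ)^2/(4*t))) m).2 hT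
    have hgeo : Summable (fun i : ℕ => r ^ i) := summable_geometric_of_lt_one hr0.le hr1
    have h8 := Summable.tsum_le_tsum hle hsumtail hgeo
    rw [tsum_geometric_of_lt_one hr0.le hr1] at h8
    have hxpos : (0:ℝ) < 1/(2*s) := by positivity
    have h9 : r ≤ (1/(2*s) + 1)⁻¹ := by
      rw [hrdef, Real.exp_neg]
      exact inv_anti₀ (by positivity) (by linarith [Real.add_one_le_exp (1/(2*s))])
    have hid : ((1/(2*s)) + 1)⁻¹ = 1 - (2*s+1)⁻¹ := by
      rw [eq_sub_iff_add_eq]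
      field_simp
      ring
    have h11 : (2*s+1)⁻¹ ≤ 1 - r := by rw [hid] at h9; linarith
    have h12 : (1 - r)⁻¹ ≤ ((2*s+1)⁻¹)⁻¹ :=
      inv_anti₀ (by positivity) h11
    rw [inv_inv] at h12
    linarith
  linarith [h1, htail, hm']

private lemma hb_sqrtatTop : Tendsto Real.sqrt atTop atTop := by
  apply tendsto_atTop_atTop.2
  intro b
  refine ⟨(max b 0)^2, fun a ha => ?_⟩
  have h1 : max b 0 ≤ Real.sqrt a := by
    rw [← Real.sqrt_sq (le_max_right b 0)]
    exact Real.sqrt_le_sqrt ha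
  exact le_trans (le_max_left b 0) h1

private lemma hb_sqrt_tendsto : Tendsto (fun t : ℝ => (4*Real.sqrt t+2)/(2*t)) atTop (nhds 0) := by
  have ha : Tendsto (fun t : ℝ => 2/Real.sqrt t) atTop (nhds 0) :=
    tendsto_const_nhds.div_atTop hb_sqrtatTop
  have hbb : Tendsto (fun t : ℝ => 1/t) atTop (nhds 0) :=
    tendsto_const_nhds.div_atTop tendsto_id
  have h1 : Tendsto (fun t : ℝ => 2/Real.sqrt t + 1/t) atTop (nhds 0) := by
    simpa using ha.add hbb
  apply h1.congr'
  filter_upwards [eventually_ge_atTop (1:ℝ)] with t ht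
  have ht0 : 0 < t := lt_of_lt_of_le one_pos ht
  have hs0 : 0 < Real.sqrt t := Real.sqrt_pos.2 ht0
  have hss : Real.sqrt t * Real.sqrt t = t := Real.mul_self_sqrt ht0.le
  field_simp
  linear_combination (-4:ℝ) * hss

/-- Large-t asymptotics of h_b: h_b(t) ~ π^{-1/2} t^{-1/2} as t → ∞. -/
theorem hb_large_t (f : ℝ → ℝ)
    (hf : ∀ t > 0, f t =
      (4 * π) ^ (-(1 : ℝ) / 2) * t ^ (-(3 : ℝ) / 2) *
        ∑' k : ℕ, ((k : ℝ) + 1) * Real.exp (-((k : ℝ) + 1) ^ 2 / (4 * t))) :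
    Tendsto (fun t => f t * Real.sqrt (π * t)) atTop (nhds 1) := by
  have hpi : (0:ℝ) < π := Real.pi_pos
  have hb0 := hb_sqrt_tendsto
  apply tendsto_of_tendsto_of_tendsto_of_le_of_le'
    (g := fun t : ℝ => 1 - (4*Real.sqrt t+2)/(2*t))
    (h := fun t : ℝ => 1 + (4*Real.sqrt t+2)/(2*t))
  · simpa using tendsto_const_nhds.sub hb0
  · simpa using tendsto_const_nhds.add hb0
  all_goals {
    filter_upwards [eventually_ge_atTop (1:ℝ)] with t ht
    have ht0 : 0 < t := lt_of_lt_of_le one_pos ht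
    have hs0 : 0 < Real.sqrt t := Real.sqrt_pos.2 ht0
    have hss : Real.sqrt t * Real.sqrt t = t := Real.mul_self_sqrt ht0.le
    have hsp : 0 < Real.sqrt π := Real.sqrt_pos.2 hpi
    set A := ∑' k : ℕ, ((k:ℝ)+1) * Real.exp (-((k:ℝ)+1) ^ 2 / (4 * t)) with hA
    set T := ∑' k : ℕ, Real.exp (-(k:ℝ)^2/(4*t)) with hT
    obtain ⟨hA1, hA2⟩ := hb_A_bounds t ht0
    have hTb := hb_T_bound t ht
    have hT0 : 0 ≤ T := tsum_nonneg (fun k => (Real.exp_pos _).le)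
    have key : (4*π)^(-(1:ℝ)/2) * t^(-(3:ℝ)/2) * Real.sqrt (π*t) = 1/(2*t) := by
      have e1 : (4*π : ℝ)^(-(1:ℝ)/2) = (Real.sqrt (4*π))⁻¹ := by
        rw [show (-(1:ℝ)/2) = -(1/2) by norm_num, Real.rpow_neg (by positivity),
          Real.sqrt_eq_rpow]
      have e2 : (t:ℝ)^(-(3:ℝ)/2) = (t * Real.sqrt t)⁻¹ := by
        rw [show (-(3:ℝ)/2) = -((1:ℝ)+1/2) by norm_num, Real.rpow_neg ht0.le,
          Real.rpow_add ht0, Real.rpow_one, Real.sqrt_eq_rpow]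
      have e3 : Real.sqrt (4*π) = 2 * Real.sqrt π := by
        rw [show (4:ℝ)*π = 2^2*π by norm_num, Real.sqrt_mul (by positivity),
          Real.sqrt_sq (by norm_num : (0:ℝ) ≤ 2)]
      have e4 : Real.sqrt (π*t) = Real.sqrt π * Real.sqrt t := Real.sqrt_mul hpi.le t
      rw [e1, e2, e3, e4]
      field_simp
    have key2 : (4*π)^(-(1:ℝ)/2) * t^(-(3:ℝ)/2) * A * Real.sqrt (π*t) = A/(2*t) := by
      calc (4*π)^(-(1:ℝ)/2) * t^(-(3:ℝ)/2) * A * Real.sqrt (π*t)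
          = ((4*π)^(-(1:ℝ)/2) * t^(-(3:ℝ)/2) * Real.sqrt (π*t)) * A := by ring
        _ = (1/(2*t)) * A := by rw [key]
        _ = A/(2*t) := by ring
    rw [hf t ht0, ← hA, key2]
    have h2t : (0:ℝ) < 2*t := by positivity
    have hc : (4*Real.sqrt t+2)/(2*t)*(2*t) = 4*Real.sqrt t+2 :=
      div_mul_cancel₀ _ (ne_of_gt h2t)
    first
      | (rw [le_div_iff₀ h2t]; nlinarith [hA1, hTb, hc])
      | (rw [div_le_iff₀ h2t]; nlinarith [hA2, hTb, hc, hT0])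
  }
end
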